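/- Let (N,v) be a convex game, ε* its least core value, x a least core point, and S an essential coalition (x(S)=v(S)+ε*). Then for all T ⊆ N\S: max over Q ⊆ S of (v(T∪Q) − x(Q)) = max{v(T), v(T∪S) − x(S)}. -/

import Mathlib

open Finset

theorem reduced_game_max_formula_complement {α : Type*} [Fintype α] [DecidableEq α]
    (v : Finset α → ℝ) (h0 : v ∅ = 0)
    (hsuper : ∀ S T : Finset α, v S + v T ≤ v (S ∩ T) + v (S ∪ T))
    (ε : ℝ) (x : α → ℝ)
    (hN : ∑ i, x i = v Finset.univ)
    (hfeas : ∀ R : Finset α, R.Nonempty → R ≠ Finset.univ → v R + ε ≤ ∑ i ∈ R, x i)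
    (S : Finset α) (hSne : S.Nonempty) (hSproper : S ≠ Finset.univ)
    (hess : ∑ i ∈ S, x i = v S + ε) :
    ∀ T : Finset α, T ⊆ Sᶜ →
      (S.powerset.sup' (Finset.powerset_nonempty _)
          (fun Q => v (T ∪ Q) - ∑ i ∈ Q, x i))
        = max (v T) (v (T ∪ S) - ∑ i ∈ S, x i) := by
  intro T hT
  have hdisj : Disjoint T S := disjoint_left.mpr (fun a ha => by
    have := hT ha; simpa using this)
  apply le_antisymm
  · apply Finset.sup'_le
    intro Q hQ
    rw [Finset.mem_powerset] at hQ
    rcases Q.eq_empty_or_nonempty with rfl | hQne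
    · simp [h0]
    · refine le_max_of_le_right ?_
      -- supermodularity with (T ∪ Q) and S
      have hkey := hsuper (T ∪ Q) S
      have hinter : (T ∪ Q) ∩ S = Q := by
        rw [Finset.union_inter_distrib_right,
          Finset.disjoint_iff_inter_eq_empty.mp hdisj,
          Finset.inter_eq_left.mpr hQ, Finset.empty_union]
      have hun : (T ∪ Q) ∪ S = T ∪ S := by
        rw [Finset.union_assoc, Finset.union_eq_right.mpr hQ]
      rw [hinter, hun] at hkey
      have hQuniv : Q ≠ Finset.univ := by
        rintro rfl
        exact hSproper (Finset.univ_subset_iff.mp hQ)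
      have hf := hfeas Q hQne hQuniv
      rw [hess]
      linarith
  · apply max_le
    · have := Finset.le_sup' (fun Q => v (T ∪ Q) - ∑ i ∈ Q, x i)
        (Finset.mem_powerset.mpr (Finset.empty_subset S))
      simpa only [Finset.union_empty, Finset.sum_empty, sub_zero] using this
    · exact Finset.le_sup' (fun Q => v (T ∪ Q) - ∑ i ∈ Q, x i)
        (Finset.mem_powerset.mpr le_rfl)
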